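/- Let K = ∫₀¹ (1/x²)(1/√(1-x⁴) - 1) dx and a_l = arcosh(1/(1-K)). Then for all a ≥ a_l, ∫₀^∞ sinh(a+t)·(sinh(2a+2t)/√(sinh²(2a+2t) - sinh²(2a)) - 1) dt < cosh(a) - 1. -/

import Mathlib

open Real MeasureTheory

noncomputable def Kc : ℝ :=
  ∫ x in Set.Ioo (0:ℝ) 1, (1/x^2) * (1 / Real.sqrt (1 - x^4) - 1)

noncomputable def arcosh (x : ℝ) : ℝ := Real.log (x + Real.sqrt (x^2 - 1))

lemma cosh_arcosh {x : ℝ} (hx : 1 ≤ x) : Real.cosh (_root_.arcosh x) = x := by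
  have h1 : (0:ℝ) ≤ x^2 - 1 := by nlinarith
  have hs : Real.sqrt (x^2-1) ^ 2 = x^2 - 1 := Real.sq_sqrt h1
  have hsn : 0 ≤ Real.sqrt (x^2-1) := Real.sqrt_nonneg _
  have hy : 0 < x + Real.sqrt (x^2-1) := by linarith
  have hinv : (x + Real.sqrt (x^2-1))⁻¹ = x - Real.sqrt (x^2-1) :=
    inv_eq_of_mul_eq_one_right (by nlinarith)
  rw [_root_.arcosh, Real.cosh_eq, Real.exp_log hy, Real.exp_neg, Real.exp_log hy, hinv]
  ring

lemma arcosh_nonneg {x : ℝ} (hx : 1 ≤ x) : 0 ≤ _root_.arcosh x :=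
  Real.log_nonneg (by have := Real.sqrt_nonneg (x^2-1); linarith)

lemma arcosh_pos {x : ℝ} (hx : 1 < x) : 0 < _root_.arcosh x :=
  Real.log_pos (by have := Real.sqrt_nonneg (x^2-1); linarith)

lemma integral_lt_integral_strict {f g : ℝ → ℝ}
    (hf : IntegrableOn f (Set.Ioi 0)) (hg : IntegrableOn g (Set.Ioi 0))
    (h : ∀ t ∈ Set.Ioi (0:ℝ), f t < g t) :
    (∫ t in Set.Ioi (0:ℝ), f t) < ∫ t in Set.Ioi (0:ℝ), g t := by
  have hd : IntegrableOn (fun t => g t - f t) (Set.Ioi 0) := hg.sub hf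
  have hnn : 0 ≤ᵐ[volume.restrict (Set.Ioi (0:ℝ))] fun t => g t - f t := by
    rw [Filter.EventuallyLE, ae_restrict_iff' measurableSet_Ioi]
    filter_upwards with t ht
    exact sub_nonneg.2 (h t ht).le
  have hpos : 0 < ∫ t in Set.Ioi (0:ℝ), (g t - f t) := by
    rw [setIntegral_pos_iff_support_of_nonneg_ae hnn hd]
    have hsub : Set.Ioi (0:ℝ) ⊆ Function.support fun t => g t - f t :=
      fun t ht => sub_ne_zero.2 (h t ht).ne'
    rw [Set.inter_eq_self_of_subset_right hsub, Real.volume_Ioi]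
    exact ENNReal.zero_lt_top
  have hsub := integral_sub hg hf
  rw [hsub] at hpos
  linarith

set_option maxHeartbeats 2000000 in
lemma key (b : ℝ) (hb : 0 < b) :
    IntegrableOn (fun t => Real.sinh (b+t) *
      (Real.cosh (b+t)^2 / Real.sqrt (Real.cosh (b+t)^4 - Real.cosh b^4) - 1)) (Set.Ioi 0) ∧
    ((∫ t in Set.Ioi (0:ℝ), Real.sinh (b+t) *
      (Real.cosh (b+t)^2 / Real.sqrt (Real.cosh (b+t)^4 - Real.cosh b^4) - 1))
        = Real.cosh b * Kc) ∧
    (0 < Real.cosh b * Kc) ∧ (Real.cosh b * Kc < Real.cosh b) := by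
  set C := Real.cosh b with hCdef
  have hC1 : 1 < C := by
    rw [hCdef]
    exact Real.one_lt_cosh.2 hb.ne'
  have hC0 : 0 < C := by linarith
  set g : ℝ → ℝ := fun t => Real.sinh (b+t) *
      (Real.cosh (b+t)^2 / Real.sqrt (Real.cosh (b+t)^4 - C^4) - 1) with hgdef
  set G : ℝ → ℝ := fun t => Real.sinh (b+t) *
      (Real.cosh (b+t) / Real.sqrt (Real.cosh (b+t)^2 - C^2) - 1) with hGdef
  set F : ℝ → ℝ := fun t => Real.sqrt (Real.cosh (b+t)^2 - C^2) - Real.cosh (b+t) with hFdef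
  -- basic facts
  have hcg : ∀ t : ℝ, 0 < t → C < Real.cosh (b+t) := by
    intro t ht
    rw [hCdef]
    refine Real.cosh_lt_cosh.2 ?_
    rw [abs_of_pos hb, abs_of_pos (by linarith : (0:ℝ) < b + t)]
    linarith
  have hcpos : ∀ t : ℝ, 0 < Real.cosh (b+t) := fun t => Real.cosh_pos _
  have hspos : ∀ t : ℝ, 0 < t → 0 < Real.sinh (b+t) := by
    intro t ht; exact Real.sinh_pos_iff.2 (by linarith)
  have hct : ∀ t : ℝ, HasDerivAt (fun u => Real.cosh (b+u)) (Real.sinh (b+t)) t := by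
    intro t
    have h1 := (Real.hasDerivAt_cosh (b+t)).comp t ((hasDerivAt_id t).const_add b)
    exact (mul_one (Real.sinh (b+t))) ▸ h1
  -- derivative of F
  have hFderiv : ∀ t ∈ Set.Ioi (0:ℝ), HasDerivAt F (G t) t := by
    intro t ht
    have hc := hcg t ht
    have hpos : 0 < Real.cosh (b+t)^2 - C^2 := by nlinarith
    have h1 : HasDerivAt (fun u => Real.cosh (b+u)^2 - C^2)
        (2 * Real.cosh (b+t) ^ 1 * Real.sinh (b+t)) t := ((hct t).pow 2).sub_const _
    have h2 := (h1.sqrt hpos.ne').sub (hct t)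
    refine h2.congr_deriv ?_
    have hs : 0 < Real.sqrt (Real.cosh (b+t)^2 - C^2) := Real.sqrt_pos.2 hpos
    rw [hGdef]
    field_simp
  -- continuity of F
  have hFcont : Continuous F := by
    rw [hFdef]
    have h1 : Continuous fun t : ℝ => Real.cosh (b+t) :=
      Real.continuous_cosh.comp (continuous_const.add continuous_id)
    exact (((h1.pow 2).sub continuous_const).sqrt).sub h1
  -- G nonneg
  have hGnn : ∀ t ∈ Set.Ioi (0:ℝ), 0 ≤ G t := by
    intro t ht
    have hc := hcg t ht
    have hpos : 0 < Real.cosh (b+t)^2 - C^2 := by nlinarith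
    have hs : 0 < Real.sqrt (Real.cosh (b+t)^2 - C^2) := Real.sqrt_pos.2 hpos
    have hle : Real.sqrt (Real.cosh (b+t)^2 - C^2) ≤ Real.cosh (b+t) := by
      have h1 : Real.cosh (b+t)^2 - C^2 ≤ Real.cosh (b+t)^2 := by nlinarith
      calc Real.sqrt (Real.cosh (b+t)^2 - C^2) ≤ Real.sqrt (Real.cosh (b+t)^2) :=
            Real.sqrt_le_sqrt h1
        _ = Real.cosh (b+t) := Real.sqrt_sq (hcpos t).le
    have h2 : 1 ≤ Real.cosh (b+t) / Real.sqrt (Real.cosh (b+t)^2 - C^2) :=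
      (one_le_div hs).2 hle
    have := (hspos t ht).le
    rw [hGdef]
    exact mul_nonneg this (by linarith)
  -- cosh tends to infinity
  have hcosh_top : Filter.Tendsto (fun t => Real.cosh (b+t)) Filter.atTop Filter.atTop := by
    apply Filter.tendsto_atTop_mono' Filter.atTop ?_ Filter.tendsto_id
    filter_upwards [Filter.eventually_ge_atTop (0:ℝ)] with t ht
    have h2 : (b+t) < Real.sinh (b+t) := Real.self_lt_sinh_iff.2 (by linarith)
    have h3 : Real.sinh (b+t) < Real.cosh (b+t) := Real.sinh_lt_cosh _
    simp only [id]
    linarith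
  -- F tends to 0
  have hFtend : Filter.Tendsto F Filter.atTop (nhds 0) := by
    have hdenom : Filter.Tendsto
        (fun t => Real.sqrt (Real.cosh (b+t)^2 - C^2) + Real.cosh (b+t))
        Filter.atTop Filter.atTop := by
      apply Filter.tendsto_atTop_mono (fun t => ?_) hcosh_top
      have := Real.sqrt_nonneg (Real.cosh (b+t)^2 - C^2)
      linarith
    have h0 : Filter.Tendsto
        (fun t => -(C^2 / (Real.sqrt (Real.cosh (b+t)^2 - C^2) + Real.cosh (b+t))))
        Filter.atTop (nhds 0) := by
      have := (Filter.Tendsto.div_atTop (tendsto_const_nhds (x := C^2)) hdenom).neg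
      simpa using this
    apply h0.congr'
    filter_upwards [Filter.eventually_ge_atTop (0:ℝ)] with t ht
    have hc : C ≤ Real.cosh (b+t) := by
      rcases eq_or_lt_of_le ht with h | h
      · rw [hCdef]; subst h; simp
      · exact (hcg t h).le
    have hXnn : 0 ≤ Real.cosh (b+t)^2 - C^2 := by nlinarith
    have hsq := Real.sq_sqrt hXnn
    have hden : 0 < Real.sqrt (Real.cosh (b+t)^2 - C^2) + Real.cosh (b+t) := by
      have := Real.sqrt_nonneg (Real.cosh (b+t)^2 - C^2)
      have := hcpos t
      linarith
    rw [hFdef]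
    simp only
    rw [neg_div', div_eq_iff hden.ne']
    nlinarith [hsq]
  -- integral of G
  have hGint : IntegrableOn G (Set.Ioi 0) :=
    integrableOn_Ioi_deriv_of_nonneg hFcont.continuousWithinAt hFderiv hGnn hFtend
  have hGval : (∫ t in Set.Ioi (0:ℝ), G t) = C := by
    have := integral_Ioi_of_hasDerivAt_of_nonneg hFcont.continuousWithinAt hFderiv hGnn hFtend
    rw [this, hFdef]
    simp [hCdef]
  -- measurability of g
  have hgmeas : Measurable g := by
    rw [hgdef]
    apply Measurable.mul
    · exact Real.measurable_sinh.comp (measurable_const.add measurable_id)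
    · apply Measurable.sub _ measurable_const
      apply Measurable.div
      · exact (Real.measurable_cosh.comp (measurable_const.add measurable_id)).pow_const 2
      · exact Real.continuous_sqrt.measurable.comp
          (((Real.measurable_cosh.comp (measurable_const.add measurable_id)).pow_const 4).sub
            measurable_const)
  -- g positive and g < G on Ioi 0
  have hg_pos : ∀ t ∈ Set.Ioi (0:ℝ), 0 < g t := by
    intro t ht
    have hc := hcg t (Set.mem_Ioi.1 ht)
    have hσ := hspos t (Set.mem_Ioi.1 ht)
    have hc0 := hcpos t
    have hY : 0 < Real.cosh (b+t)^4 - C^4 := by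
      have := pow_lt_pow_left₀ hc hC0.le (n := 4) (by norm_num)
      linarith
    have hs4 : 0 < Real.sqrt (Real.cosh (b+t)^4 - C^4) := Real.sqrt_pos.2 hY
    have hlt : Real.sqrt (Real.cosh (b+t)^4 - C^4) < Real.cosh (b+t)^2 := by
      have h1 : Real.cosh (b+t)^4 - C^4 < (Real.cosh (b+t)^2)^2 := by
        have h2 : (Real.cosh (b+t)^2)^2 = Real.cosh (b+t)^4 := by ring
        have h3 : 0 < C^4 := by positivity
        linarith
      calc Real.sqrt (Real.cosh (b+t)^4 - C^4)
          < Real.sqrt ((Real.cosh (b+t)^2)^2) := Real.sqrt_lt_sqrt hY.le h1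
        _ = Real.cosh (b+t)^2 := Real.sqrt_sq (by positivity)
    have h2 : 1 < Real.cosh (b+t)^2 / Real.sqrt (Real.cosh (b+t)^4 - C^4) :=
      (one_lt_div hs4).2 hlt
    rw [hgdef]
    exact mul_pos hσ (by linarith)
  have hg_lt_G : ∀ t ∈ Set.Ioi (0:ℝ), g t < G t := by
    intro t ht
    have hc := hcg t (Set.mem_Ioi.1 ht)
    have hσ := hspos t (Set.mem_Ioi.1 ht)
    have hc0 := hcpos t
    have hX : 0 < Real.cosh (b+t)^2 - C^2 := by nlinarith
    have hsX : 0 < Real.sqrt (Real.cosh (b+t)^2 - C^2) := Real.sqrt_pos.2 hX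
    have hkey : Real.cosh (b+t)^2 / Real.sqrt (Real.cosh (b+t)^4 - C^4)
        < Real.cosh (b+t) / Real.sqrt (Real.cosh (b+t)^2 - C^2) := by
      have hfac : Real.cosh (b+t)^4 - C^4
          = (Real.cosh (b+t)^2 - C^2) * (Real.cosh (b+t)^2 + C^2) := by ring
      rw [hfac, Real.sqrt_mul hX.le]
      have hsZ : 0 < Real.sqrt (Real.cosh (b+t)^2 + C^2) := Real.sqrt_pos.2 (by positivity)
      rw [div_lt_div_iff₀ (by positivity) hsX]
      have h5 : Real.cosh (b+t) < Real.sqrt (Real.cosh (b+t)^2 + C^2) := by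
        have h6 : Real.cosh (b+t) = Real.sqrt (Real.cosh (b+t)^2) :=
          (Real.sqrt_sq hc0.le).symm
        rw [h6]
        exact Real.sqrt_lt_sqrt (by positivity) (by nlinarith)
      nlinarith [mul_pos (mul_pos hc0 hsX) (sub_pos.2 h5)]
    rw [hgdef, hGdef]
    exact mul_lt_mul_of_pos_left (by linarith) hσ
  -- g integrable
  have hgint : IntegrableOn g (Set.Ioi 0) := by
    apply hGint.mono' hgmeas.aestronglyMeasurable
    rw [ae_restrict_iff' measurableSet_Ioi]
    filter_upwards with t ht
    rw [Real.norm_eq_abs, abs_of_nonneg (hg_pos t ht).le]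
    exact (hg_lt_G t ht).le
  -- change of variables
  set φ : ℝ → ℝ := fun t => C / Real.cosh (b+t) with hφdef
  set φ' : ℝ → ℝ := fun t => C * (-Real.sinh (b+t) / Real.cosh (b+t)^2) with hφ'def
  have hφd : ∀ t ∈ Set.Ioi (0:ℝ), HasDerivWithinAt φ (φ' t) (Set.Ioi 0) t := by
    intro t _
    have h1 := ((hct t).inv (hcpos t).ne').const_mul C
    have h2 : HasDerivAt φ (φ' t) t := by
      rw [hφdef, hφ'def]
      simpa [div_eq_mul_inv] using h1
    exact h2.hasDerivWithinAt
  have hmono : ∀ {u v : ℝ}, 0 < u → u < v → Real.cosh (b+u) < Real.cosh (b+v) := by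
    intro u v hu huv
    refine Real.cosh_lt_cosh.2 ?_
    rw [abs_of_pos (by linarith), abs_of_pos (by linarith)]
    linarith
  have hφinj : Set.InjOn φ (Set.Ioi 0) := by
    intro t1 h1 t2 h2 heq
    rw [hφdef] at heq
    simp only at heq
    rw [div_eq_div_iff (hcpos t1).ne' (hcpos t2).ne'] at heq
    have e : Real.cosh (b+t2) = Real.cosh (b+t1) := mul_left_cancel₀ hC0.ne' (by linarith)
    by_contra hne
    rcases lt_or_gt_of_ne hne with h | h
    · have := hmono (Set.mem_Ioi.1 h1) h; linarith
    · have := hmono (Set.mem_Ioi.1 h2) h; linarith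
  have himg : φ '' Set.Ioi 0 = Set.Ioo 0 1 := by
    ext u
    constructor
    · rintro ⟨t, ht, rfl⟩
      have hc := hcg t (Set.mem_Ioi.1 ht)
      refine ⟨div_pos hC0 (hcpos t), ?_⟩
      rw [hφdef]
      simp only
      rw [div_lt_one (hcpos t)]
      exact hc
    · rintro ⟨hu0, hu1⟩
      have hx1 : 1 < C / u := by rw [lt_div_iff₀ hu0]; nlinarith
      have hco := _root_.cosh_arcosh hx1.le
      have harc0 : 0 ≤ _root_.arcosh (C/u) := _root_.arcosh_nonneg hx1.le
      refine ⟨_root_.arcosh (C/u) - b, ?_, ?_⟩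
      · rw [Set.mem_Ioi, sub_pos]
        by_contra hle
        push_neg at hle
        have h7 : Real.cosh (_root_.arcosh (C/u)) ≤ Real.cosh b :=
          Real.cosh_le_cosh.2 (by rw [abs_of_nonneg harc0, abs_of_pos hb]; exact hle)
        rw [hco, ← hCdef] at h7
        have h8 : C < C / u := by rw [lt_div_iff₀ hu0]; nlinarith
        linarith
      · show C / Real.cosh (b + (_root_.arcosh (C/u) - b)) = u
        rw [show b + (_root_.arcosh (C/u) - b) = _root_.arcosh (C/u) by ring, hco]
        field_simp
  have hCoV := integral_image_eq_integral_abs_deriv_smul measurableSet_Ioi hφd hφinj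
      (fun x => (1/x^2) * (1 / Real.sqrt (1 - x^4) - 1))
  rw [himg] at hCoV
  have hpt : ∀ t ∈ Set.Ioi (0:ℝ),
      |φ' t| • ((fun x => (1/x^2) * (1 / Real.sqrt (1 - x^4) - 1)) (φ t)) = C⁻¹ * g t := by
    intro t ht
    have hc := hcg t (Set.mem_Ioi.1 ht)
    have hσ := hspos t (Set.mem_Ioi.1 ht)
    have hc0 := hcpos t
    have h4nn : (0:ℝ) < Real.cosh (b+t)^4 - C^4 := by
      have := pow_lt_pow_left₀ hc hC0.le (n := 4) (by norm_num)
      linarith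
    have hs4 : 0 < Real.sqrt (Real.cosh (b+t)^4 - C^4) := Real.sqrt_pos.2 h4nn
    have habs : |φ' t| = C * Real.sinh (b+t) / Real.cosh (b+t)^2 := by
      have h9 : φ' t = -(C * Real.sinh (b+t) / Real.cosh (b+t)^2) := by
        rw [hφ'def]; simp only; ring
      rw [h9, abs_neg, abs_of_pos (div_pos (mul_pos hC0 hσ) (pow_pos hc0 2))]
    have e2 : 1 - (C/Real.cosh (b+t))^4
        = (Real.sqrt (Real.cosh (b+t)^4 - C^4)/Real.cosh (b+t)^2)^2 := by
      rw [div_pow, div_pow, Real.sq_sqrt h4nn.le, one_sub_div (pow_ne_zero 4 hc0.ne')]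
      congr 1
      ring
    have hφt : φ t = C / Real.cosh (b+t) := by rw [hφdef]
    rw [smul_eq_mul, habs, hφt, hgdef]
    simp only
    rw [e2, Real.sqrt_sq (by positivity)]
    field_simp
  have hKc : Kc = ∫ t in Set.Ioi (0:ℝ), C⁻¹ * g t := by
    have : Kc = ∫ x in Set.Ioo (0:ℝ) 1, (1/x^2) * (1 / Real.sqrt (1 - x^4) - 1) := rfl
    rw [this, hCoV]
    exact setIntegral_congr_fun measurableSet_Ioi hpt
  rw [MeasureTheory.integral_const_mul] at hKc
  have hKCg : C * Kc = ∫ t in Set.Ioi (0:ℝ), g t := by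
    rw [hKc, ← mul_assoc, mul_inv_cancel₀ hC0.ne', one_mul]
  have hglt : (∫ t in Set.Ioi (0:ℝ), g t) < C := by
    have h10 := integral_lt_integral_strict hgint hGint hg_lt_G
    rw [hGval] at h10
    exact h10
  have hgpos : 0 < ∫ t in Set.Ioi (0:ℝ), g t := by
    have h11 := integral_lt_integral_strict (integrableOn_zero) hgint
      (fun t ht => hg_pos t ht)
    simpa using h11
  exact ⟨hgint, hKCg.symm, by rw [hKCg]; exact hgpos, by rw [hKCg]; exact hglt⟩

set_option maxHeartbeats 1000000 in
theorem f_lt_cosh_sub_one (a : ℝ) (ha : _root_.arcosh (1/(1 - Kc)) ≤ a) :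
    (∫ t in Set.Ioi (0:ℝ),
      Real.sinh (a+t) *
        (Real.sinh (2*a+2*t) / Real.sqrt (Real.sinh (2*a+2*t)^2 - Real.sinh (2*a)^2) - 1))
      < Real.cosh a - 1 := by
  obtain ⟨-, -, hKpos1, hKlt1⟩ := key 1 one_pos
  have hcosh1 : 0 < Real.cosh 1 := Real.cosh_pos 1
  have hK0 : 0 < Kc := by
    rcases mul_pos_iff.1 hKpos1 with ⟨-, h⟩ | ⟨h, -⟩
    · exact h
    · linarith
  have hK1 : Kc < 1 := (mul_lt_iff_lt_one_right hcosh1).1 hKlt1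
  have h1K : 0 < 1 - Kc := by linarith
  have hx1 : 1 < 1/(1-Kc) := by rw [lt_div_iff₀ h1K]; linarith
  have ha0 : 0 < a := lt_of_lt_of_le (_root_.arcosh_pos hx1) ha
  have hCa : 1/(1-Kc) ≤ Real.cosh a := by
    have h2 : Real.cosh (_root_.arcosh (1/(1-Kc))) ≤ Real.cosh a :=
      Real.cosh_le_cosh.2 (by rw [abs_of_nonneg (_root_.arcosh_nonneg hx1.le), abs_of_pos ha0]; exact ha)
    rwa [_root_.cosh_arcosh hx1.le] at h2
  have hKC : Kc * Real.cosh a ≤ Real.cosh a - 1 := by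
    rw [div_le_iff₀ h1K] at hCa
    nlinarith
  obtain ⟨hgint, hgval, -, -⟩ := key a ha0
  set gfun : ℝ → ℝ := fun t => Real.sinh (a+t) *
      (Real.cosh (a+t)^2 / Real.sqrt (Real.cosh (a+t)^4 - Real.cosh a^4) - 1) with hgdef
  set f : ℝ → ℝ := fun t => Real.sinh (a+t) *
      (Real.sinh (2*a+2*t) / Real.sqrt (Real.sinh (2*a+2*t)^2 - Real.sinh (2*a)^2) - 1)
    with hfdef
  have hc1 : 1 < Real.cosh a := Real.one_lt_cosh.2 ha0.ne'
  have hC0 : 0 < Real.cosh a := by linarith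
  have hcc : ∀ t : ℝ, 0 < t → Real.cosh a < Real.cosh (a+t) := by
    intro t ht
    refine Real.cosh_lt_cosh.2 ?_
    rw [abs_of_pos ha0, abs_of_pos (by linarith : (0:ℝ) < a + t)]
    linarith
  have hσpos : ∀ t : ℝ, 0 < t → 0 < Real.sinh (a+t) := by
    intro t ht; exact Real.sinh_pos_iff.2 (by linarith)
  have h2s : ∀ t : ℝ, Real.sinh (2*a+2*t) = 2 * Real.sinh (a+t) * Real.cosh (a+t) := by
    intro t
    rw [show 2*a+2*t = 2*(a+t) by ring, Real.sinh_two_mul]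
  have h2a : Real.sinh (2*a) = 2 * Real.sinh a * Real.cosh a := Real.sinh_two_mul a
  -- pointwise comparison
  have hflt : ∀ t ∈ Set.Ioi (0:ℝ), f t < gfun t := by
    intro t ht
    replace ht : 0 < t := ht
    have hc := hcc t ht
    have hσ := hσpos t ht
    have hc0 : 0 < Real.cosh (a+t) := Real.cosh_pos _
    have hs2 : Real.sinh (a+t)^2 = Real.cosh (a+t)^2 - 1 := Real.sinh_sq _
    have hsa2 : Real.sinh a^2 = Real.cosh a^2 - 1 := Real.sinh_sq a
    have hCc2 : Real.cosh a^2 < Real.cosh (a+t)^2 := by nlinarith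
    have hYpos : 0 < Real.cosh (a+t)^4 - Real.cosh a^4 := by
      have := pow_lt_pow_left₀ hc hC0.le (n := 4) (by norm_num)
      linarith
    have hXpos : 0 < Real.sinh (2*a+2*t)^2 - Real.sinh (2*a)^2 := by
      rw [h2s, h2a]
      nlinarith [mul_pos (sub_pos.2 hCc2)
        (show (0:ℝ) < Real.cosh (a+t)^2 + Real.cosh a^2 - 1 by nlinarith)]
    have hsX : 0 < Real.sqrt (Real.sinh (2*a+2*t)^2 - Real.sinh (2*a)^2) :=
      Real.sqrt_pos.2 hXpos
    have hsY : 0 < Real.sqrt (Real.cosh (a+t)^4 - Real.cosh a^4) := Real.sqrt_pos.2 hYpos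
    have hkey : Real.sinh (2*a+2*t) / Real.sqrt (Real.sinh (2*a+2*t)^2 - Real.sinh (2*a)^2)
        < Real.cosh (a+t)^2 / Real.sqrt (Real.cosh (a+t)^4 - Real.cosh a^4) := by
      rw [div_lt_div_iff₀ hsX hsY]
      apply lt_of_pow_lt_pow_left₀ 2 (by positivity)
      have e1 : (Real.sinh (2*a+2*t) * Real.sqrt (Real.cosh (a+t)^4 - Real.cosh a^4))^2
          = 4 * Real.sinh (a+t)^2 * Real.cosh (a+t)^2
            * (Real.cosh (a+t)^4 - Real.cosh a^4) := by
        rw [mul_pow, Real.sq_sqrt hYpos.le, h2s]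
        ring
      have e2 : (Real.cosh (a+t)^2
            * Real.sqrt (Real.sinh (2*a+2*t)^2 - Real.sinh (2*a)^2))^2
          = (Real.cosh (a+t)^2)^2 * (4 * Real.sinh (a+t)^2 * Real.cosh (a+t)^2
            - 4 * Real.sinh a^2 * Real.cosh a^2) := by
        rw [mul_pow, Real.sq_sqrt hXpos.le, h2s, h2a]
        ring
      rw [e1, e2, hs2, hsa2]
      nlinarith [mul_pos (mul_pos (pow_pos hc0 2) (pow_pos hC0 2)) (sub_pos.2 hCc2)]
    rw [hfdef, hgdef]
    simp only
    exact mul_lt_mul_of_pos_left (by linarith) hσ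
  -- f nonneg
  have hfnn : ∀ t ∈ Set.Ioi (0:ℝ), 0 ≤ f t := by
    intro t ht
    replace ht : 0 < t := ht
    have hσ := hσpos t ht
    have hc0 : 0 < Real.cosh (a+t) := Real.cosh_pos _
    have hc := hcc t ht
    have hs2 : Real.sinh (a+t)^2 = Real.cosh (a+t)^2 - 1 := Real.sinh_sq _
    have hsa2 : Real.sinh a^2 = Real.cosh a^2 - 1 := Real.sinh_sq a
    have hCc2 : Real.cosh a^2 < Real.cosh (a+t)^2 := by nlinarith
    have hXpos : 0 < Real.sinh (2*a+2*t)^2 - Real.sinh (2*a)^2 := by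
      rw [h2s, h2a]
      nlinarith [mul_pos (sub_pos.2 hCc2)
        (show (0:ℝ) < Real.cosh (a+t)^2 + Real.cosh a^2 - 1 by nlinarith)]
    have hsX : 0 < Real.sqrt (Real.sinh (2*a+2*t)^2 - Real.sinh (2*a)^2) :=
      Real.sqrt_pos.2 hXpos
    have hσ2 : 0 < Real.sinh (2*a+2*t) := by rw [h2s]; positivity
    have hle : Real.sqrt (Real.sinh (2*a+2*t)^2 - Real.sinh (2*a)^2)
        ≤ Real.sinh (2*a+2*t) := by
      calc Real.sqrt (Real.sinh (2*a+2*t)^2 - Real.sinh (2*a)^2)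
          ≤ Real.sqrt (Real.sinh (2*a+2*t)^2) :=
            Real.sqrt_le_sqrt (by nlinarith [sq_nonneg (Real.sinh (2*a))])
        _ = Real.sinh (2*a+2*t) := Real.sqrt_sq hσ2.le
    have h4 : 1 ≤ Real.sinh (2*a+2*t)
        / Real.sqrt (Real.sinh (2*a+2*t)^2 - Real.sinh (2*a)^2) := (one_le_div hsX).2 hle
    rw [hfdef]
    exact mul_nonneg hσ.le (by linarith)
  -- f measurable
  have hfmeas : Measurable f := by
    rw [hfdef]
    apply Measurable.mul
    · exact Real.measurable_sinh.comp (measurable_const.add measurable_id)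
    · apply Measurable.sub _ measurable_const
      apply Measurable.div
      · exact Real.measurable_sinh.comp (measurable_const.add (measurable_id.const_mul 2))
      · exact Real.continuous_sqrt.measurable.comp
          (((Real.measurable_sinh.comp
              (measurable_const.add (measurable_id.const_mul 2))).pow_const 2).sub
            measurable_const)
  have hfint : IntegrableOn f (Set.Ioi 0) := by
    apply hgint.mono' hfmeas.aestronglyMeasurable
    rw [ae_restrict_iff' measurableSet_Ioi]
    filter_upwards with t ht
    rw [Real.norm_eq_abs, abs_of_nonneg (hfnn t ht)]
    exact (hflt t ht).le
  calc (∫ t in Set.Ioi (0:ℝ), f t)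
      < ∫ t in Set.Ioi (0:ℝ), gfun t := integral_lt_integral_strict hfint hgint hflt
    _ = Real.cosh a * Kc := hgval
    _ ≤ Real.cosh a - 1 := by linarith
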